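/- Let K ≥ 1, 0 < ε < 1/2, and θ ∈ [k/(K+2), (k+1)/(K+2)] for some k ∈ {1,...,K}. Suppose nonnegative weights w_1,...,w_K (with w_i = E[T_i]μ_i) and estimates θ̂_i = i/(K+2) satisfy: w_i/w_{k-1} ≤ (1/(1-ε))·(ε/(1-ε))^{i'-1} when i = k - i' for 1 ≤ i' ≤ k-1 (relative to the normalizing total), and symmetrically for i > k, and w_k/∑_j w_j ≤ 1. Then the weighted risk ∑_{i=1}^K (w_i/∑_j w_j)·(i/(K+2) - θ)² ≤ (1/(K+2)²) · (1/(1-ε)) · (2·∑_{i=1}^∞ (ε/(1-ε))^{i-1}(i+1)² + 1). -/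

import Mathlib

lemma geo_sq_summable {q : ℝ} (hq0 : 0 ≤ q) (hq1 : q < 1) :
    Summable fun i : ℕ => q ^ i * ((i : ℝ) + 2) ^ 2 := by
  have hnorm : ‖q‖ < 1 := by rwa [Real.norm_eq_abs, abs_of_nonneg hq0]
  have h2 := summable_pow_mul_geometric_of_norm_lt_one (R := ℝ) 2 hnorm
  have h1 := summable_pow_mul_geometric_of_norm_lt_one (R := ℝ) 1 hnorm
  have h0 := summable_geometric_of_lt_one hq0 hq1
  have := (h2.add ((h1.mul_left 4).add (h0.mul_left 4)))
  refine this.congr fun i => ?_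
  push_cast
  ring

lemma geo_sq_partial_le {q : ℝ} (hq0 : 0 ≤ q) (hq1 : q < 1) (m : ℕ) :
    ∑ j ∈ Finset.Icc 1 m, q ^ (j - 1) * ((j : ℝ) + 1) ^ 2
      ≤ ∑' i : ℕ, q ^ i * ((i : ℝ) + 2) ^ 2 := by
  have hre : ∀ n : ℕ, ∑ j ∈ Finset.Icc 1 n, q ^ (j - 1) * ((j : ℝ) + 1) ^ 2
      = ∑ i ∈ Finset.range n, q ^ i * ((i : ℝ) + 2) ^ 2 := by
    intro n
    induction n with
    | zero => simp
    | succ n ih =>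
      rw [Finset.sum_Icc_succ_top (by omega : 1 ≤ n + 1), ih, Finset.sum_range_succ]
      congr 1
      simp only [Nat.add_sub_cancel]
      push_cast
      ring
  rw [hre]
  exact Summable.sum_le_tsum _ (fun i _ => by positivity) (geo_sq_summable hq0 hq1)

/-- The core risk-bound computation: if the normalized weights decay geometrically
away from the index `k` nearest to `θ`, the weighted quadratic risk is
`O(1/(K+2)²)`. -/
theorem weighted_risk_bound (K k : ℕ) (hk1 : 1 ≤ k) (hkK : k ≤ K)
    (ε θ : ℝ) (hε0 : 0 < ε) (hε : ε < 1 / 2)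
    (hθl : (k : ℝ) / ((K : ℝ) + 2) ≤ θ) (hθr : θ ≤ ((k : ℝ) + 1) / ((K : ℝ) + 2))
    (w : ℕ → ℝ) (hw : ∀ i, 0 ≤ w i)
    (htot : 0 < ∑ j ∈ Finset.Icc 1 K, w j)
    (hleft : ∀ i, 1 ≤ i → i ≤ k - 1 →
      w (k - i) ≤ (1 / (1 - ε)) * (ε / (1 - ε)) ^ (i - 1) * ∑ j ∈ Finset.Icc 1 K, w j)
    (hright : ∀ i, 1 ≤ i → i ≤ K - k →
      w (k + i) ≤ (1 / (1 - ε)) * (ε / (1 - ε)) ^ (i - 1) * ∑ j ∈ Finset.Icc 1 K, w j) :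
    ∑ i ∈ Finset.Icc 1 K,
        (w i / ∑ j ∈ Finset.Icc 1 K, w j) * ((i : ℝ) / ((K : ℝ) + 2) - θ) ^ 2
      ≤ (1 / ((K : ℝ) + 2) ^ 2) * (1 / (1 - ε)) *
          (2 * ∑' i : ℕ, (ε / (1 - ε)) ^ i * ((i : ℝ) + 2) ^ 2 + 1) := by
  set S : ℝ := ∑ j ∈ Finset.Icc 1 K, w j with hSdef
  have hε1 : (0:ℝ) < 1 - ε := by linarith
  set q : ℝ := ε / (1 - ε) with hqdef
  have hq0 : 0 ≤ q := div_nonneg hε0.le hε1.le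
  have hq1 : q < 1 := by rw [hqdef, div_lt_one hε1]; linarith
  have hK2 : (0:ℝ) < (K : ℝ) + 2 := by positivity
  have hinv1 : (1:ℝ) ≤ 1 / (1 - ε) := by
    rw [le_div_iff₀ hε1]; linarith
  set T : ℝ := ∑' i : ℕ, q ^ i * ((i : ℝ) + 2) ^ 2 with hTdef
  have hT0 : 0 ≤ T :=
    tsum_nonneg fun i => by positivity
  set f : ℕ → ℝ := fun i => (w i / S) * ((i : ℝ) / ((K : ℝ) + 2) - θ) ^ 2 with hfdef
  -- split the index set
  have hsplit : Finset.Icc 1 K = Finset.Icc 1 (k - 1) ∪ ({k} ∪ Finset.Icc (k + 1) K) := by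
    ext a; simp only [Finset.mem_Icc, Finset.mem_union, Finset.mem_singleton]; omega
  have hd1 : Disjoint (Finset.Icc 1 (k - 1)) ({k} ∪ Finset.Icc (k + 1) K) := by
    rw [Finset.disjoint_left]
    intro a ha hb
    simp only [Finset.mem_Icc, Finset.mem_union, Finset.mem_singleton] at ha hb
    omega
  have hd2 : Disjoint ({k} : Finset ℕ) (Finset.Icc (k + 1) K) := by
    rw [Finset.disjoint_left]
    intro a ha hb
    simp only [Finset.mem_Icc, Finset.mem_singleton] at ha hb
    omega
  have hsum_split : ∑ i ∈ Finset.Icc 1 K, f i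
      = (∑ i ∈ Finset.Icc 1 (k - 1), f i) + (f k + ∑ i ∈ Finset.Icc (k + 1) K, f i) := by
    rw [hsplit, Finset.sum_union hd1, Finset.sum_union hd2, Finset.sum_singleton]
  -- bound for the middle term
  have hwkS : w k ≤ S := by
    refine Finset.single_le_sum (fun i _ => hw i) ?_
    simp only [Finset.mem_Icc]; omega
  have hmid : f k ≤ 1 / ((K : ℝ) + 2) ^ 2 := by
    have h1 : w k / S ≤ 1 := by
      rw [div_le_one htot]; exact hwkS
    have h2 : ((k : ℝ) / ((K : ℝ) + 2) - θ) ^ 2 ≤ (1 / ((K : ℝ) + 2)) ^ 2 := by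
      have e : ((k : ℝ) + 1) / ((K : ℝ) + 2) = (k : ℝ) / ((K : ℝ) + 2) + 1 / ((K : ℝ) + 2) := by
        ring
      have hp : (0:ℝ) < 1 / ((K : ℝ) + 2) := by positivity
      apply sq_le_sq'
      · linarith
      · linarith
    calc f k ≤ 1 * (1 / ((K : ℝ) + 2)) ^ 2 := by
          apply mul_le_mul h1 h2 (by positivity) (by norm_num)
      _ = 1 / ((K : ℝ) + 2) ^ 2 := by rw [one_mul, div_pow, one_pow]
  -- left sum
  have hleftsum : ∑ i ∈ Finset.Icc 1 (k - 1), f i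
      ≤ (1 / ((K : ℝ) + 2) ^ 2) * (1 / (1 - ε)) * T := by
    have hre : ∑ i ∈ Finset.Icc 1 (k - 1), f i = ∑ j ∈ Finset.Icc 1 (k - 1), f (k - j) := by
      refine Finset.sum_nbij' (fun j => k - j) (fun j => k - j) ?_ ?_ ?_ ?_ ?_ <;>
        intro a ha <;> simp only [Finset.mem_Icc] at * <;> try omega
      show f a = f (k - (k - a))
      congr 1
      omega
    rw [hre]
    have hterm : ∀ j ∈ Finset.Icc 1 (k - 1),
        f (k - j) ≤ (1 / (1 - ε)) * q ^ (j - 1) * (((j : ℝ) + 1) ^ 2 / ((K : ℝ) + 2) ^ 2) := by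
      intro j hj
      simp only [Finset.mem_Icc] at hj
      have hcast : (((k - j : ℕ) : ℝ)) = (k : ℝ) - (j : ℝ) := by
        exact Nat.cast_sub (by omega)
      have h1 : w (k - j) / S ≤ (1 / (1 - ε)) * q ^ (j - 1) := by
        rw [div_le_iff₀ htot]
        exact hleft j hj.1 hj.2
      have h2 : (((k - j : ℕ) : ℝ) / ((K : ℝ) + 2) - θ) ^ 2
          ≤ (((j : ℝ) + 1) / ((K : ℝ) + 2)) ^ 2 := by
        rw [hcast]
        have hj0 : (0:ℝ) ≤ (j : ℝ) := Nat.cast_nonneg j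
        have e1 : ((k : ℝ) - (j : ℝ)) / ((K : ℝ) + 2) + ((j : ℝ) + 1) / ((K : ℝ) + 2)
            = ((k : ℝ) + 1) / ((K : ℝ) + 2) := by ring
        have e2 : ((k : ℝ) - (j : ℝ)) / ((K : ℝ) + 2) ≤ (k : ℝ) / ((K : ℝ) + 2) := by
          gcongr
          linarith
        have e3 : (0:ℝ) ≤ ((j : ℝ) + 1) / ((K : ℝ) + 2) := by positivity
        apply sq_le_sq'
        · linarith
        · linarith
      calc f (k - j) ≤ ((1 / (1 - ε)) * q ^ (j - 1)) * ((((j : ℝ) + 1) / ((K : ℝ) + 2)) ^ 2) := by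
            apply mul_le_mul h1 h2 (by positivity) (by positivity)
        _ = (1 / (1 - ε)) * q ^ (j - 1) * (((j : ℝ) + 1) ^ 2 / ((K : ℝ) + 2) ^ 2) := by
            rw [div_pow ((j : ℝ) + 1) ((K : ℝ) + 2) 2]
      done
    calc ∑ j ∈ Finset.Icc 1 (k - 1), f (k - j)
        ≤ ∑ j ∈ Finset.Icc 1 (k - 1),
            (1 / (1 - ε)) * q ^ (j - 1) * (((j : ℝ) + 1) ^ 2 / ((K : ℝ) + 2) ^ 2) :=
          Finset.sum_le_sum hterm
      _ = (1 / ((K : ℝ) + 2) ^ 2) * (1 / (1 - ε)) *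
            ∑ j ∈ Finset.Icc 1 (k - 1), q ^ (j - 1) * (((j : ℝ) + 1)) ^ 2 := by
          rw [Finset.mul_sum]
          refine Finset.sum_congr rfl fun j _ => ?_
          rw [div_pow]
          ring
      _ ≤ (1 / ((K : ℝ) + 2) ^ 2) * (1 / (1 - ε)) * T := by
          apply mul_le_mul_of_nonneg_left (geo_sq_partial_le hq0 hq1 _) (by positivity)
  -- right sum
  have hrightsum : ∑ i ∈ Finset.Icc (k + 1) K, f i
      ≤ (1 / ((K : ℝ) + 2) ^ 2) * (1 / (1 - ε)) * T := by
    have hre : ∑ i ∈ Finset.Icc (k + 1) K, f i = ∑ j ∈ Finset.Icc 1 (K - k), f (k + j) := by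
      refine Finset.sum_nbij' (fun i => i - k) (fun j => k + j) ?_ ?_ ?_ ?_ ?_ <;>
        intro a ha <;> simp only [Finset.mem_Icc] at * <;> try omega
      show f a = f (k + (a - k))
      congr 1
      omega
    rw [hre]
    have hterm : ∀ j ∈ Finset.Icc 1 (K - k),
        f (k + j) ≤ (1 / (1 - ε)) * q ^ (j - 1) * (((j : ℝ) + 1) ^ 2 / ((K : ℝ) + 2) ^ 2) := by
      intro j hj
      simp only [Finset.mem_Icc] at hj
      have h1 : w (k + j) / S ≤ (1 / (1 - ε)) * q ^ (j - 1) := by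
        rw [div_le_iff₀ htot]
        exact hright j hj.1 hj.2
      have h2 : (((k + j : ℕ) : ℝ) / ((K : ℝ) + 2) - θ) ^ 2
          ≤ (((j : ℝ) + 1) / ((K : ℝ) + 2)) ^ 2 := by
        have hcast : (((k + j : ℕ) : ℝ)) = (k : ℝ) + (j : ℝ) := by push_cast; ring
        rw [hcast]
        have hj0 : (0:ℝ) ≤ (j : ℝ) := Nat.cast_nonneg j
        have e1 : ((k : ℝ) + (j : ℝ)) / ((K : ℝ) + 2) + ((j : ℝ) + 1) / ((K : ℝ) + 2)
            = ((k : ℝ) + 2 * (j : ℝ) + 1) / ((K : ℝ) + 2) := by ring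
        have e2 : ((k : ℝ) + 1) / ((K : ℝ) + 2) ≤ ((k : ℝ) + 2 * (j : ℝ) + 1) / ((K : ℝ) + 2) := by
          gcongr
          linarith
        have e3 : ((k : ℝ) + (j : ℝ)) / ((K : ℝ) + 2) - ((j : ℝ) + 1) / ((K : ℝ) + 2)
            = ((k : ℝ) - 1) / ((K : ℝ) + 2) := by ring
        have e4 : ((k : ℝ) - 1) / ((K : ℝ) + 2) ≤ (k : ℝ) / ((K : ℝ) + 2) := by
          gcongr
          linarith
        apply sq_le_sq'
        · linarith
        · linarith
      calc f (k + j) ≤ ((1 / (1 - ε)) * q ^ (j - 1)) * ((((j : ℝ) + 1) / ((K : ℝ) + 2)) ^ 2) := by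
            apply mul_le_mul h1 h2 (by positivity) (by positivity)
        _ = (1 / (1 - ε)) * q ^ (j - 1) * (((j : ℝ) + 1) ^ 2 / ((K : ℝ) + 2) ^ 2) := by
            rw [div_pow ((j : ℝ) + 1) ((K : ℝ) + 2) 2]
    calc ∑ j ∈ Finset.Icc 1 (K - k), f (k + j)
        ≤ ∑ j ∈ Finset.Icc 1 (K - k),
            (1 / (1 - ε)) * q ^ (j - 1) * (((j : ℝ) + 1) ^ 2 / ((K : ℝ) + 2) ^ 2) :=
          Finset.sum_le_sum hterm
      _ = (1 / ((K : ℝ) + 2) ^ 2) * (1 / (1 - ε)) *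
            ∑ j ∈ Finset.Icc 1 (K - k), q ^ (j - 1) * (((j : ℝ) + 1)) ^ 2 := by
          rw [Finset.mul_sum]
          refine Finset.sum_congr rfl fun j _ => ?_
          rw [div_pow]
          ring
      _ ≤ (1 / ((K : ℝ) + 2) ^ 2) * (1 / (1 - ε)) * T := by
          apply mul_le_mul_of_nonneg_left (geo_sq_partial_le hq0 hq1 _) (by positivity)
  have hmid' : f k ≤ (1 / ((K : ℝ) + 2) ^ 2) * (1 / (1 - ε)) * 1 := by
    calc f k ≤ 1 / ((K : ℝ) + 2) ^ 2 := hmid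
      _ = (1 / ((K : ℝ) + 2) ^ 2) * 1 := by rw [mul_one]
      _ ≤ (1 / ((K : ℝ) + 2) ^ 2) * (1 / (1 - ε)) := by
        apply mul_le_mul_of_nonneg_left hinv1 (by positivity)
      _ = (1 / ((K : ℝ) + 2) ^ 2) * (1 / (1 - ε)) * 1 := by rw [mul_one]
  calc ∑ i ∈ Finset.Icc 1 K, f i
      = (∑ i ∈ Finset.Icc 1 (k - 1), f i) + (f k + ∑ i ∈ Finset.Icc (k + 1) K, f i) :=
        hsum_split
    _ ≤ (1 / ((K : ℝ) + 2) ^ 2) * (1 / (1 - ε)) * T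
        + ((1 / ((K : ℝ) + 2) ^ 2) * (1 / (1 - ε)) * 1
          + (1 / ((K : ℝ) + 2) ^ 2) * (1 / (1 - ε)) * T) := by
        exact add_le_add hleftsum (add_le_add hmid' hrightsum)
    _ = (1 / ((K : ℝ) + 2) ^ 2) * (1 / (1 - ε)) * (2 * T + 1) := by ring
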